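/- arXiv:1304.5633 — 2 statements merged into one kernel-verified Lean document; each statement's English description precedes it below -/
import Mathlib

section
/- If G is a labeled graph with n vertices and m edges such that between every ordered pair of vertices there are p edge-disjoint s-folded ascending paths, then τ(n,k) ≤ (s + ⌈(k+1)/p⌉)·m, where τ(n,k) is the minimum number of edges in a k-fault-tolerant gossip graph on n vertices. -/
/-- A labeled (multi)graph: `m` edges indexed by `Fin m`, each edge being an
unordered pair of vertices (a call), labeled by the time at which the call occurs. -/
structure LabeledGraph (V : Type) where
  m : ℕ
  ends : Fin m → Sym2 V
  label : Fin m → ℕ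

namespace LabeledGraph

variable {V : Type}

lemma pos_right_of_fin {a b : ℕ} (e : Fin (a * b)) : 0 < b := by
  rcases Nat.eq_zero_or_pos b with h | h
  · exact absurd e.isLt (by simp [h])
  · exact h

/-- The maximal label occurring in `G`. -/
def maxLabel (G : LabeledGraph V) : ℕ :=
  Finset.univ.sup fun e => G.label e

/-- `G.IsWalk u v es` : the list of edges `es` forms a walk from `u` to `v`. -/
inductive IsWalk (G : LabeledGraph V) : V → V → List (Fin G.m) → Prop
  | nil (v : V) : IsWalk G v v []
  | cons {u w v : V} {e : Fin G.m} {es : List (Fin G.m)} :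
      G.ends e = s(u, w) → IsWalk G w v es → IsWalk G u v (e :: es)

/-- An ascending path from `u` to `v`: a walk whose labels strictly increase. -/
def IsAscPath (G : LabeledGraph V) (u v : V) (es : List (Fin G.m)) : Prop :=
  G.IsWalk u v es ∧ List.Chain' (· < ·) (es.map G.label)

/-- Number of descents (non-increases) in a list of labels. -/
def descents : List ℕ → ℕ
  | a :: b :: rest => (if b ≤ a then 1 else 0) + descents (b :: rest)
  | _ => 0

/-- An `s`-folded ascending path from `u` to `v`: a walk using `s`-many “folds”,
i.e. a concatenation of `s+1` maximal ascending subpaths. -/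
def IsFoldedPath (G : LabeledGraph V) (u v : V) (es : List (Fin G.m)) (s : ℕ) : Prop :=
  G.IsWalk u v es ∧ es.Nodup ∧ descents (es.map G.label) = s

/-- `G` is a `k`-fault-tolerant gossip graph: after deleting any `≤ k` edges, every
ordered pair of vertices is still joined by an ascending path. -/
def IsFaultTolerant (G : LabeledGraph V) (k : ℕ) : Prop :=
  ∀ F : Finset (Fin G.m), F.card ≤ k →
    ∀ u v : V, ∃ es : List (Fin G.m), G.IsAscPath u v es ∧ ∀ e ∈ es, e ∉ F

/-- Edge sum of two labeled graphs: labels of `G₂` are shifted above those of `G₁`. -/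
def edgeSum (G₁ G₂ : LabeledGraph V) : LabeledGraph V where
  m := G₁.m + G₂.m
  ends := fun e =>
    if hlt : e.val < G₁.m then G₁.ends ⟨e.val, hlt⟩
    else G₂.ends ⟨e.val - G₁.m, by have := e.isLt; omega⟩
  label := fun e =>
    if hlt : e.val < G₁.m then G₁.label ⟨e.val, hlt⟩
    else G₂.label ⟨e.val - G₁.m, by have := e.isLt; omega⟩ + G₁.maxLabel

/-- Edge sum `hG` of `h` identical copies of `G`; the `i`-th copy has labels shifted
up by `i · maxLabel G`. -/
def hCopy (G : LabeledGraph V) (h : ℕ) : LabeledGraph V where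
  m := h * G.m
  ends := fun e => G.ends ⟨e.val % G.m, Nat.mod_lt _ (pos_right_of_fin e)⟩
  label := fun e =>
    G.label ⟨e.val % G.m, Nat.mod_lt _ (pos_right_of_fin e)⟩ + (e.val / G.m) * G.maxLabel

/-- The copy of an edge `e` of `G` in the `i`-th copy inside `hG`. -/
def copyEdge (G : LabeledGraph V) {h : ℕ} (i : Fin h) (e : Fin G.m) : Fin (G.hCopy h).m :=
  ⟨i.val * G.m + e.val, by
    show i.val * G.m + e.val < h * G.m
    calc i.val * G.m + e.val < (i.val + 1) * G.m := by rw [Nat.succ_mul]; omega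
    _ ≤ h * G.m := Nat.mul_le_mul_right _ i.isLt⟩

/-- `τ(n,k)`: the minimum number of edges (calls) of a `k`-fault-tolerant gossip
graph (scheme) on `n` nodes. -/
noncomputable def tau (n k : ℕ) : ℕ :=
  sInf {c | ∃ G : LabeledGraph (Fin n), G.m = c ∧ G.IsFaultTolerant k}

/-- The Knödel graph `W_{Δ,n}` on `n = 2h` vertices: for each `j < h` and each
`l ∈ {1,…,Δ}` an edge labeled `l` between `(1,j)` and `(2, (j + 2^{l-1} - 1) mod h)`
(here `Fin 2` value `0` plays the role of `1`, and `1` the role of `2`). -/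
def knodel (Δ h : ℕ) : LabeledGraph (Fin 2 × Fin h) where
  m := Δ * h
  ends := fun e =>
    have hh : 0 < h := pos_right_of_fin e
    s( ((0 : Fin 2), ⟨e.val % h, Nat.mod_lt _ hh⟩),
       ((1 : Fin 2), ⟨(e.val % h + (2 ^ (e.val / h) - 1)) % h, Nat.mod_lt _ hh⟩) )
  label := fun e => e.val / h + 1

/-- The interval `R((α,β);(γ,δ))` in the Knödel graph on `2h` vertices (it does not
depend on `γ`); vertex class `0` plays the role of `1`, class `1` the role of `2`. -/
def knodelInterval (h : ℕ) (α : Fin 2) (β δ : ℕ) : ℕ :=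
  if α = 0 then (if β ≤ δ then δ - β else h - (β - δ))
  else (if δ ≤ β then β - δ else h - (δ - β))

/-- The labeled wheel graph on `n = 2k+1` vertices: center `none` (vertex `u`),
rim vertices `some (i, 0) = vᵢ` and `some (i, 1) = vᵢ'`; edges `(vᵢ,vᵢ')` labeled 1,
`(vᵢ',u)` labeled 2, `(vᵢ,u)` labeled 3, `(vᵢ', v_{i+1})` labeled 4. -/
def wheel (k : ℕ) : LabeledGraph (Option (Fin k × Fin 2)) where
  m := 4 * k
  ends := fun e =>
    have hk : 0 < k := pos_right_of_fin e
    let i : Fin k := ⟨e.val % k, Nat.mod_lt _ hk⟩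
    if e.val / k = 0 then s(some (i, 0), some (i, 1))
    else if e.val / k = 1 then s(some (i, 1), none)
    else if e.val / k = 2 then s(some (i, 0), none)
    else s(some (i, 1), some (⟨(i.val + 1) % k, Nat.mod_lt _ hk⟩, 0))
  label := fun e => e.val / k + 1

/-- A labeled graph is a valid (timed) schedule when simultaneous calls form a
matching: no two distinct edges with the same label share a vertex. -/
def IsMatchingSchedule (G : LabeledGraph V) : Prop :=
  ∀ e e' : Fin G.m, e ≠ e' → G.label e = G.label e' →
    ∀ v : V, ¬(v ∈ G.ends e ∧ v ∈ G.ends e')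

/-- `T(n,k)`: the minimum completion time of a `k`-fault-tolerant gossip scheme on
`n` nodes in which non-overlapping pairs may call simultaneously. -/
noncomputable def minTime (n k : ℕ) : ℕ :=
  sInf {t | ∃ G : LabeledGraph (Fin n),
    G.IsMatchingSchedule ∧ G.IsFaultTolerant k ∧ G.maxLabel ≤ t}

/-! ### Auxiliary machinery for Statement 3 -/

/-- Lift of a list of edges of `G` into copy indices: starting in copy `c`,
move up a copy at each descent. Produces raw natural-number edge indices. -/
def liftList (G : LabeledGraph V) : ℕ → List (Fin G.m) → List ℕ
  | _, [] => []
  | c, [e] => [c * G.m + e.val]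
  | c, e :: e' :: rest =>
      (c * G.m + e.val) ::
        liftList G (if G.label e' ≤ G.label e then c + 1 else c) (e' :: rest)

lemma liftList_cons (G : LabeledGraph V) (c : ℕ) (e : Fin G.m) (tl : List (Fin G.m)) :
    ∃ l, liftList G c (e :: tl) = (c * G.m + e.val) :: l := by
  cases tl with
  | nil => exact ⟨[], by simp [liftList]⟩
  | cons e' rest => exact ⟨_, by rw [liftList]⟩

lemma mem_liftList {G : LabeledGraph V} :
    ∀ {c : ℕ} {es : List (Fin G.m)} {x : ℕ}, x ∈ liftList G c es →
    ∃ e ∈ es, ∃ c', c ≤ c' ∧ c' ≤ c + descents (es.map G.label) ∧ x = c' * G.m + e.val := by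
  intro c es
  induction es generalizing c with
  | nil => intro x hx; simp [liftList] at hx
  | cons e tail ih =>
    intro x hx
    cases tail with
    | nil =>
      simp [liftList] at hx
      exact ⟨e, by simp, c, le_rfl, by simp [descents], hx⟩
    | cons e' rest =>
      rw [liftList] at hx
      rcases List.mem_cons.1 hx with hx | hx
      · exact ⟨e, List.mem_cons_self .., c, le_rfl, Nat.le_add_right _ _, hx⟩
      · obtain ⟨f, hf, c', h1, h2, h3⟩ := ih hx
        refine ⟨f, List.mem_cons_of_mem _ hf, c', ?_, ?_, h3⟩
        · split_ifs at h1 <;> omega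
        · have hd : descents ((e :: e' :: rest).map G.label) =
              (if G.label e' ≤ G.label e then 1 else 0)
                + descents ((e' :: rest).map G.label) := by
            simp [descents]
          split_ifs at h1 h2 hd <;> omega

lemma mulAddMod (G : LabeledGraph V) (c : ℕ) (e : Fin G.m) :
    (c * G.m + e.val) % G.m = e.val := by
  rw [add_comm, Nat.add_mul_mod_self_right, Nat.mod_eq_of_lt e.isLt]

lemma mem_liftList_mod {G : LabeledGraph V} {c : ℕ} {es : List (Fin G.m)} {x : ℕ}
    (hx : x ∈ liftList G c es) : ∃ e ∈ es, x % G.m = e.val := by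
  obtain ⟨e, he, c', _, _, rfl⟩ := mem_liftList hx
  exact ⟨e, he, mulAddMod G c' e⟩

lemma liftList_copy_eq {G : LabeledGraph V} :
    ∀ {es : List (Fin G.m)}, es.Nodup → ∀ {c c' x : ℕ},
      x ∈ liftList G c es → x ∈ liftList G c' es → c = c' := by
  intro es
  induction es with
  | nil => intro _ c c' x hx; simp [liftList] at hx
  | cons e tail ih =>
    intro hnd c c' x hx hx'
    have hnd' := List.nodup_cons.1 hnd
    cases tail with
    | nil =>
      simp [liftList] at hx hx'
      have h1 : c * G.m = c' * G.m := by omega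
      exact Nat.eq_of_mul_eq_mul_right e.pos h1
    | cons e' rest =>
      rw [liftList] at hx hx'
      have hres : ∀ {y : ℕ}, y ∈ liftList G (if G.label e' ≤ G.label e then c' + 1 else c')
          (e' :: rest) ∨ y ∈ liftList G (if G.label e' ≤ G.label e then c + 1 else c)
          (e' :: rest) → y % G.m ≠ e.val := by
        intro y hy
        rcases hy with hy | hy <;>
        · obtain ⟨f, hf, hmf⟩ := mem_liftList_mod hy
          intro hcon
          exact hnd'.1 ((Fin.ext (hmf.symm.trans hcon) : f = e) ▸ hf)
      rcases List.mem_cons.1 hx with hx | hx <;> rcases List.mem_cons.1 hx' with hx' | hx'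
      · have h1 : c * G.m = c' * G.m := by omega
        exact Nat.eq_of_mul_eq_mul_right e.pos h1
      · exact absurd (mulAddMod G c e) (hres (Or.inl (hx ▸ hx')))
      · exact absurd (mulAddMod G c' e) (hres (Or.inr (hx' ▸ hx)))
      · have := ih hnd'.2 hx hx'
        split_ifs at this <;> omega

lemma liftList_disjoint {G : LabeledGraph V} {es es' : List (Fin G.m)}
    (hd : List.Disjoint es es') {c c' x : ℕ}
    (hx : x ∈ liftList G c es) (hx' : x ∈ liftList G c' es') : False := by
  obtain ⟨e, he, hme⟩ := mem_liftList_mod hx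
  obtain ⟨f, hf, hmf⟩ := mem_liftList_mod hx'
  exact hd he ((Fin.ext (hme.symm.trans hmf) : e = f) ▸ hf)

/-- Modified `h`-fold copy of `G`, with labels in the `i`-th copy shifted up by
`i · (maxLabel G + 1)` so that copies have strictly increasing label ranges. -/
def hCopy' (G : LabeledGraph V) (h : ℕ) : LabeledGraph V where
  m := h * G.m
  ends := fun e => G.ends ⟨e.val % G.m, Nat.mod_lt _ (pos_right_of_fin e)⟩
  label := fun e =>
    G.label ⟨e.val % G.m, Nat.mod_lt _ (pos_right_of_fin e)⟩
      + (e.val / G.m) * (G.maxLabel + 1)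

lemma hCopy'_ends (G : LabeledGraph V) {h : ℕ} (c : ℕ) (e : Fin G.m)
    (hb : c * G.m + e.val < h * G.m) :
    (hCopy' G h).ends ⟨c * G.m + e.val, hb⟩ = G.ends e := by
  have h1 : (c * G.m + e.val) % G.m = e.val := mulAddMod G c e
  simp only [hCopy']
  congr 1
  exact Fin.ext h1

lemma hCopy'_label (G : LabeledGraph V) {h : ℕ} (c : ℕ) (e : Fin G.m)
    (hb : c * G.m + e.val < h * G.m) :
    (hCopy' G h).label ⟨c * G.m + e.val, hb⟩ = G.label e + c * (G.maxLabel + 1) := by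
  have h1 : (c * G.m + e.val) % G.m = e.val := mulAddMod G c e
  have h2 : (c * G.m + e.val) / G.m = c := by
    rw [mul_comm, Nat.mul_add_div e.pos, Nat.div_eq_of_lt e.isLt, Nat.add_zero]
  simp only [hCopy']
  rw [h2]
  congr 2
  exact Fin.ext h1

/-- Lifting a walk of `G` with few descents to an ascending path of `hCopy' G h`. -/
lemma lift_ascPath (G : LabeledGraph V) (h : ℕ) {u v : V} {es : List (Fin G.m)}
    (hw : G.IsWalk u v es) :
    ∀ c : ℕ, c + descents (es.map G.label) < h →
      ∃ L : List (Fin (hCopy' G h).m),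
        (hCopy' G h).IsWalk u v L ∧ List.Chain' (· < ·) (L.map (hCopy' G h).label) ∧
        L.map Fin.val = liftList G c es := by
  induction hw with
  | nil w => exact fun c _ => ⟨[], IsWalk.nil w, List.isChain_nil, by simp [liftList]⟩
  | @cons u w v e es hends htail ih =>
    intro c hc
    cases es with
    | nil =>
      cases htail
      have hcb : c < h := by simpa [descents] using hc
      have hb : c * G.m + e.val < h * G.m := by
        calc c * G.m + e.val < (c + 1) * G.m := by rw [Nat.succ_mul]; omega
          _ ≤ 0 + h * G.m := by
              rw [Nat.zero_add]; exact Nat.mul_le_mul_right _ hcb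
          _ = h * G.m := by rw [Nat.zero_add]
      refine ⟨[⟨c * G.m + e.val, hb⟩], ?_, List.isChain_singleton _, by simp [liftList]⟩
      exact IsWalk.cons (by rw [hCopy'_ends G c e hb]; exact hends) (IsWalk.nil w)
    | cons e' rest =>
      have hd : descents ((e :: e' :: rest).map G.label) =
          (if G.label e' ≤ G.label e then 1 else 0)
            + descents ((e' :: rest).map G.label) := by
        simp [descents]
      set c₂ := if G.label e' ≤ G.label e then c + 1 else c with hc₂
      have hc₂lt : c₂ + descents ((e' :: rest).map G.label) < h := by
        rw [hc₂]; split_ifs at hd ⊢ <;> omega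
      obtain ⟨L', hw', hch', hv'⟩ := ih c₂ hc₂lt
      have hcb : c < h := by omega
      have hb : c * G.m + e.val < h * G.m := by
        calc c * G.m + e.val < (c + 1) * G.m := by rw [Nat.succ_mul]; omega
          _ ≤ h * G.m := Nat.mul_le_mul_right _ hcb
      obtain ⟨tl2, htl2⟩ := liftList_cons G c₂ e' rest
      rw [htl2] at hv'
      obtain ⟨a, L'', rfl⟩ : ∃ a L'', L' = a :: L'' := by
        cases L' with
        | nil => simp at hv'
        | cons a L'' => exact ⟨a, L'', rfl⟩
      simp only [List.map_cons, List.cons.injEq] at hv'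
      have hab : a = ⟨c₂ * G.m + e'.val, hv'.1 ▸ a.isLt⟩ := Fin.ext hv'.1
      refine ⟨⟨c * G.m + e.val, hb⟩ :: a :: L'', ?_, ?_, ?_⟩
      · exact IsWalk.cons (by rw [hCopy'_ends G c e hb]; exact hends) hw'
      · rw [List.map_cons, List.Chain', List.isChain_cons]
        refine ⟨?_, hch'⟩
        intro y hy
        simp only [List.map_cons, List.head?_cons, Option.mem_def, Option.some.injEq] at hy
        subst hy
        rw [hCopy'_label G c e hb, hab, hCopy'_label G c₂ e' (by rw [← hv'.1]; exact a.isLt)]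
        have hle : G.label e ≤ G.maxLabel := Finset.le_sup (Finset.mem_univ e)
        rw [hc₂]; split_ifs with hcase
        · have : (c + 1) * (G.maxLabel + 1) = c * (G.maxLabel + 1) + (G.maxLabel + 1) := by
            ring
          omega
        · omega
      · rw [liftList, ← hc₂, htl2]
        simp only [List.map_cons]
        rw [hv'.1, hv'.2]

end LabeledGraph

open LabeledGraph in
/-- If `G` is a labeled graph on `n` vertices with `m` edges such that
between every ordered pair of vertices there are `p` edge-disjoint `s`-folded
ascending paths, then `τ(n,k) ≤ (s + ⌈(k+1)/p⌉)·m`. -/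
theorem tau_le_of_folded_paths (n m k s p : ℕ) (hp : 0 < p)
    (G : LabeledGraph (Fin n)) (hm : G.m = m)
    (hall : ∀ u v : Fin n, ∃ P : Fin p → List (Fin G.m),
      (∀ i, G.IsFoldedPath u v (P i) s) ∧
      (∀ i j, i ≠ j → List.Disjoint (P i) (P j))) :
    tau n k ≤ (s + (k + 1 + p - 1) / p) * m := by
  set q := (k + 1 + p - 1) / p with hq
  have hqp : k + 1 ≤ q * p := by
    have h1 := Nat.div_add_mod (k + 1 + p - 1) p
    have h2 : (k + 1 + p - 1) % p < p := Nat.mod_lt _ hp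
    rw [← hq] at h1
    rw [mul_comm q p]
    omega
  set h := s + q with hh
  set H := hCopy' G h with hH
  have hHm : H.m = (s + q) * m := by rw [hH]; simp only [hCopy', hm, hh]
  refine Nat.sInf_le ⟨H, hHm, ?_⟩
  intro F hF u v
  obtain ⟨P, hP, hPd⟩ := hall u v
  have key : ∀ (i : Fin p) (j : Fin q), ∃ L : List (Fin H.m),
      H.IsWalk u v L ∧ List.Chain' (· < ·) (L.map H.label) ∧
      L.map Fin.val = liftList G j.val (P i) := by
    intro i j
    obtain ⟨hw, _, hdes⟩ := hP i
    exact lift_ascPath G h hw j.val (by rw [hdes]; have := j.isLt; omega)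
  choose L hLw hLc hLv using key
  have hmemval : ∀ (i : Fin p) (j : Fin q) (x : Fin H.m),
      x ∈ L i j → x.val ∈ liftList G j.val (P i) := by
    intro i j x hx
    rw [← hLv i j]
    exact List.mem_map_of_mem hx
  obtain ⟨i, j, hfree⟩ : ∃ i j, ∀ e ∈ L i j, e ∉ F := by
    by_contra hcon
    push_neg at hcon
    choose f hf1 hf2 using fun ij : Fin p × Fin q => hcon ij.1 ij.2
    have hinj : Set.InjOn f (Finset.univ : Finset (Fin p × Fin q)) := by
      intro ij _ ij' _ heq
      by_contra hne
      have hx : (f ij).val ∈ liftList G ij.2.val (P ij.1) := hmemval _ _ _ (hf1 ij)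
      have hx' : (f ij).val ∈ liftList G ij'.2.val (P ij'.1) := by
        rw [heq]; exact hmemval _ _ _ (hf1 ij')
      rcases eq_or_ne ij.1 ij'.1 with h1 | h1
      · have h2 : ij.2 ≠ ij'.2 := fun h2 => hne (Prod.ext h1 h2)
        rw [← h1] at hx'
        exact h2 (Fin.ext (liftList_copy_eq (hP ij.1).2.1 hx hx'))
      · exact liftList_disjoint (hPd _ _ h1) hx hx'
    have hcard := Finset.card_le_card_of_injOn f (fun ij _ => hf2 ij) hinj
    rw [Finset.card_univ] at hcard
    simp only [Fintype.card_prod, Fintype.card_fin] at hcard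
    have : p * q ≤ k := le_trans hcard hF
    have : q * p = p * q := mul_comm q p
    omega
  exact ⟨L i j, ⟨hLw i j, hLc i j⟩, hfree⟩
end

section
/- In the Knödel graph W_{Δ,n} with n even, the set of vertices from which there is an ascending path to the vertex (1,β) equals {(γ, (β+δ) mod n/2) : γ ∈ {1,2}, 0 ≤ δ ≤ 2^{Δ−1} − 1}. -/
open LabeledGraph

namespace KnodelAux
variable {Δ h : ℕ}

lemma knodel_label (e : Fin (knodel Δ h).m) : (knodel Δ h).label e = e.val / h + 1 := rfl

lemma knodel_exp_lt (e : Fin (knodel Δ h).m) : e.val / h < Δ := by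
  have hh : 0 < h := pos_right_of_fin e
  have he : e.val < Δ * h := e.isLt
  exact (Nat.div_lt_iff_lt_mul hh).mpr (by omega)

lemma knodel_ends (hh : 0 < h) (e : Fin (knodel Δ h).m) :
    (knodel Δ h).ends e =
      s( ((0 : Fin 2), ⟨e.val % h, Nat.mod_lt _ hh⟩),
         ((1 : Fin 2), ⟨(e.val % h + (2 ^ (e.val / h) - 1)) % h, Nat.mod_lt _ hh⟩) ) := rfl

lemma mod_cancel {a b : ℕ} (k : ℕ) (H : (a + k) % h = (b + k) % h) : a % h = b % h :=
  Nat.ModEq.add_right_cancel' k H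

lemma asc_nil_of_eq (G : LabeledGraph (Fin 2 × Fin h)) {u v : Fin 2 × Fin h} (huv : u = v) :
    G.IsAscPath u v [] := by
  subst huv; exact ⟨IsWalk.nil u, List.isChain_nil⟩

lemma asc_cons {G : LabeledGraph (Fin 2 × Fin h)} {u w v : Fin 2 × Fin h} {e : Fin G.m}
    {es : List (Fin G.m)} (hends : G.ends e = s(u, w)) (hasc : G.IsAscPath w v es)
    (hlt : ∀ e' ∈ es, G.label e < G.label e') : G.IsAscPath u v (e :: es) := by
  refine ⟨IsWalk.cons hends hasc.1, ?_⟩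
  rw [List.map_cons]; refine List.isChain_cons.mpr ?_
  refine ⟨fun b hb => ?_, hasc.2⟩
  have hb' := List.mem_of_mem_head? hb
  obtain ⟨e', he', rfl⟩ := List.mem_map.mp hb'
  exact hlt e' he'

lemma kedge_spec (hΔ : 1 ≤ Δ) (hh : 0 < h) (a r : ℕ) (ha : a < Δ) (hr : r < h) :
    ∃ e : Fin (knodel Δ h).m, e.val / h = a ∧ e.val % h = r ∧
      (knodel Δ h).ends e = s( ((0 : Fin 2), ⟨r, hr⟩),
        ((1 : Fin 2), ⟨(r + (2 ^ a - 1)) % h, Nat.mod_lt _ hh⟩) ) ∧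
      (knodel Δ h).label e = a + 1 := by
  have hm : a * h + r < (knodel Δ h).m := by
    show a * h + r < Δ * h
    calc a * h + r < a * h + h := by omega
    _ = (a + 1) * h := by ring
    _ ≤ Δ * h := Nat.mul_le_mul_right _ (by omega)
  have h1 : ((a * h + r : ℕ)) % h = r := by
    rw [Nat.mul_comm, Nat.mul_add_mod, Nat.mod_eq_of_lt hr]
  have h2 : ((a * h + r : ℕ)) / h = a := by
    rw [Nat.mul_comm, Nat.mul_add_div hh, Nat.div_eq_of_lt hr, Nat.add_zero]
  refine ⟨⟨a * h + r, hm⟩, h2, h1, ?_, ?_⟩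
  · rw [knodel_ends hh]
    congr 1 <;> simp [h1, h2]
  · show (a * h + r) / h + 1 = a + 1
    rw [h2]


lemma fwd (Δ h : ℕ) (hh : 0 < h) (β : Fin h) :
    ∀ (es : List (Fin (knodel Δ h).m)) (u : Fin 2 × Fin h),
      (knodel Δ h).IsWalk u ((0 : Fin 2), β) es →
      List.Chain' (· < ·) (es.map (knodel Δ h).label) →
      ∃ δ : ℕ, u.2.val = (β.val + δ) % h ∧
        ((u.1 = 0 ∧ (δ = 0 ∨ ∃ e ∈ es.head?,
            2 ^ (e.val / h) ≤ δ ∧ δ + 2 ^ (e.val / h) ≤ 2 ^ (Δ - 1))) ∨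
         (u.1 = 1 ∧ ∃ e ∈ es.head?,
            2 ^ (e.val / h) ≤ δ + 1 ∧ δ + 1 ≤ 2 ^ (Δ - 1))) := by
  intro es
  induction es with
  | nil =>
    intro u hw _
    cases hw
    exact ⟨0, by simp [Nat.mod_eq_of_lt β.isLt], Or.inl ⟨rfl, Or.inl rfl⟩⟩
  | cons e es ih =>
    intro u hw hchain
    cases hw with
    | @cons _ w _ _ _ hends htail =>
      rw [List.map_cons] at hchain; replace hchain := List.isChain_cons.mp hchain
      obtain ⟨hhd, hch⟩ := hchain
      have hsym := (knodel_ends hh e).symm.trans hends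
      rw [Sym2.eq_iff] at hsym
      have hexp : e.val / h < Δ := knodel_exp_lt e
      have hone : (1 : ℕ) ≤ 2 ^ (e.val / h) := Nat.one_le_two_pow
      have hhd' : ∀ e' ∈ es.head?, e.val / h < e'.val / h := by
        intro e' he'
        have hmem : (knodel Δ h).label e' ∈ (es.map (knodel Δ h).label).head? := by
          rw [List.head?_map, he']; rfl
        have := hhd _ hmem
        simp only [knodel_label] at this
        omega
      obtain ⟨δ₁, hval, hcase⟩ := ih w htail hch
      rcases hsym with ⟨hu, hw⟩ | ⟨hu, hw⟩
      · -- u is the class-0 endpoint, w the class-1 endpoint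
        subst hu; subst hw
        rcases hcase with ⟨h0, -⟩ | ⟨-, e', he', hb1, hb2⟩
        · exact absurd h0 (by simp)
        · have hc := hhd' e' he'
          have h2c : 2 * 2 ^ (e.val / h) ≤ 2 ^ (e'.val / h) := by
            have := Nat.pow_le_pow_right (show 1 ≤ 2 by norm_num)
              (show e.val / h + 1 ≤ e'.val / h by omega)
            rwa [pow_succ, Nat.mul_comm] at this
          refine ⟨δ₁ + 1 - 2 ^ (e.val / h), ?_,
            Or.inl ⟨rfl, Or.inr ⟨e, rfl, by omega, by omega⟩⟩⟩
          have hval' : (e.val % h + (2 ^ (e.val / h) - 1)) % h = (β.val + δ₁) % h := hval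
          have hδ : β.val + δ₁ =
              β.val + (δ₁ + 1 - 2 ^ (e.val / h)) + (2 ^ (e.val / h) - 1) := by omega
          rw [hδ] at hval'
          have := mod_cancel (h := h) (2 ^ (e.val / h) - 1) hval'
          simpa [Nat.mod_mod_of_dvd] using this
      · -- u is the class-1 endpoint, w the class-0 endpoint
        subst hu; subst hw
        rcases hcase with ⟨-, hcase0⟩ | ⟨h1, -⟩
        swap
        · exact absurd h1 (by simp)
        have hval' : e.val % h = (β.val + δ₁) % h := hval
        have hub : δ₁ + 2 ^ (e.val / h) ≤ 2 ^ (Δ - 1) := by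
          rcases hcase0 with rfl | ⟨e', he', hb1, hb2⟩
          · have := Nat.pow_le_pow_right (show 1 ≤ 2 by norm_num)
              (show e.val / h ≤ Δ - 1 by omega)
            omega
          · have hc := hhd' e' he'
            have : (2 : ℕ) ^ (e.val / h) ≤ 2 ^ (e'.val / h) :=
              Nat.pow_le_pow_right (by norm_num) (by omega)
            omega
        refine ⟨δ₁ + (2 ^ (e.val / h) - 1), ?_,
          Or.inr ⟨rfl, e, rfl, by omega, by omega⟩⟩
        show (e.val % h + (2 ^ (e.val / h) - 1)) % h = _
        rw [hval', Nat.mod_add_mod]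
        congr 1
        omega

lemma two_pow_succ_dvd {x c : ℕ} (hx : x ≠ 0) (hdvd : 2 ^ c ∣ x) (hnot : ¬ 2 ^ (c + 1) ∣ x) :
    2 ^ (c + 1) ∣ x + 2 ^ c := by
  obtain ⟨m, hm⟩ := hdvd
  have hm2 : ¬ 2 ∣ m := by
    rintro ⟨k, rfl⟩
    exact hnot ⟨k, by rw [hm, pow_succ]; ring⟩
  have hmodd : m % 2 = 1 := by omega
  obtain ⟨k, hk⟩ : ∃ k, m + 1 = 2 * k := ⟨(m + 1) / 2, by omega⟩
  exact ⟨k, by rw [hm, pow_succ]; calc 2 ^ c * m + 2 ^ c = 2 ^ c * (m + 1) := by ring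
    _ = 2 ^ c * (2 * k) := by rw [hk]
    _ = 2 ^ c * 2 * k := by ring⟩

lemma bwd (Δ h : ℕ) (hΔ : 1 ≤ Δ) (hh : 0 < h) (β : Fin h) :
    ∀ (n t δ : ℕ), Δ ≤ t + n →
      ((δ = 0 ∨ (2 ^ t ∣ δ ∧ 2 ^ t ≤ δ ∧ δ + 2 ^ t ≤ 2 ^ (Δ - 1))) →
        ∃ es, (knodel Δ h).IsAscPath
            ((0 : Fin 2), ⟨(β.val + δ) % h, Nat.mod_lt _ hh⟩) ((0 : Fin 2), β) es ∧
          ∀ e ∈ es, t ≤ e.val / h) ∧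
      ((2 ^ t ∣ (δ + 1) ∧ 2 ^ t ≤ δ + 1 ∧ δ + 1 ≤ 2 ^ (Δ - 1)) →
        ∃ es, (knodel Δ h).IsAscPath
            ((1 : Fin 2), ⟨(β.val + δ) % h, Nat.mod_lt _ hh⟩) ((0 : Fin 2), β) es ∧
          ∀ e ∈ es, t ≤ e.val / h) := by
  intro n
  induction n with
  | zero =>
    intro t δ hΔt
    have hpow : (2 : ℕ) ^ (Δ - 1) < 2 ^ t :=
      Nat.pow_lt_pow_right (by norm_num) (by omega)
    constructor
    · rintro (rfl | ⟨-, hle, hub⟩)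
      · refine ⟨[], asc_nil_of_eq _ ?_, by simp⟩
        ext <;> simp [Nat.mod_eq_of_lt β.isLt]
      · omega
    · rintro ⟨-, hle, hub⟩
      omega
  | succ n IH =>
    intro t δ hΔt
    constructor
    · -- class 0
      rintro (rfl | ⟨hdvd, hle, hub⟩)
      · refine ⟨[], asc_nil_of_eq _ ?_, by simp⟩
        ext <;> simp [Nat.mod_eq_of_lt β.isLt]
      · have hδ0 : δ ≠ 0 := by
          have : (0:ℕ) < 2 ^ t := Nat.pow_pos (by norm_num)
          omega
        have h2t : (0:ℕ) < 2 ^ t := Nat.pow_pos (by norm_num)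
        set a := δ.factorization 2 with hadef
        have h2a : 2 ^ a ∣ δ := Nat.ordProj_dvd δ 2
        have hnot : ¬ 2 ^ (a + 1) ∣ δ := Nat.pow_succ_factorization_not_dvd hδ0 Nat.prime_two
        have hta : t ≤ a := (Nat.Prime.pow_dvd_iff_le_factorization Nat.prime_two hδ0).mp hdvd
        have h2aδ : 2 ^ a ≤ δ := Nat.le_of_dvd (by omega) h2a
        have haΔ : a + 1 ≤ Δ - 1 := by
          have : (2:ℕ) ^ a < 2 ^ (Δ - 1) := by omega
          have := (Nat.pow_lt_pow_iff_right (by norm_num : 1 < 2)).mp this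
          omega
        have hdvdsub : 2 ^ a ∣ 2 ^ (Δ - 1) - δ :=
          Nat.dvd_sub (pow_dvd_pow 2 (by omega)) h2a
        have hub' : δ + 2 ^ a ≤ 2 ^ (Δ - 1) := by
          have := Nat.le_of_dvd (by omega) hdvdsub
          omega
        have hdvd1 : 2 ^ (a + 1) ∣ (δ + 2 ^ a - 1) + 1 := by
          rw [show δ + 2 ^ a - 1 + 1 = δ + 2 ^ a by omega]
          exact two_pow_succ_dvd hδ0 h2a hnot
        obtain ⟨-, C1⟩ := IH (a + 1) (δ + 2 ^ a - 1) (by omega)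
        have hge1 : 2 ^ (a + 1) ≤ δ + 2 ^ a :=
          Nat.le_of_dvd (by omega) (two_pow_succ_dvd hδ0 h2a hnot)
        obtain ⟨es, hasc, hmem⟩ := C1 ⟨hdvd1, by omega, by omega⟩
        obtain ⟨e, hdiv, hmod, hends, hlab⟩ :=
          kedge_spec hΔ hh a ((β.val + δ) % h) (by omega) (Nat.mod_lt _ hh)
        have hv : (⟨((β.val + δ) % h + (2 ^ a - 1)) % h, Nat.mod_lt _ hh⟩ : Fin h)
            = ⟨(β.val + (δ + 2 ^ a - 1)) % h, Nat.mod_lt _ hh⟩ := by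
          apply Fin.ext
          show _ % h = _
          rw [Nat.mod_add_mod]
          congr 1
          omega
        rw [hv] at hends
        refine ⟨e :: es, asc_cons hends hasc ?_, ?_⟩
        · intro e' he'
          have := hmem e' he'
          rw [hlab, knodel_label]
          omega
        · intro e' he'
          rcases List.mem_cons.mp he' with rfl | he'
          · omega
          · have := hmem e' he'; omega
    · -- class 1
      rintro ⟨hdvd, hle, hub⟩
      have hδ0 : δ + 1 ≠ 0 := by omega
      set c := (δ + 1).factorization 2 with hcdef
      have h2c : 2 ^ c ∣ δ + 1 := Nat.ordProj_dvd _ 2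
      have hnot : ¬ 2 ^ (c + 1) ∣ δ + 1 := Nat.pow_succ_factorization_not_dvd hδ0 Nat.prime_two
      have htc : t ≤ c := (Nat.Prime.pow_dvd_iff_le_factorization Nat.prime_two hδ0).mp hdvd
      have h2cδ : 2 ^ c ≤ δ + 1 := Nat.le_of_dvd (by omega) h2c
      have hcΔ : c ≤ Δ - 1 := by
        have : (2:ℕ) ^ c ≤ 2 ^ (Δ - 1) := by omega
        exact (Nat.pow_le_pow_iff_right (by norm_num : 1 < 2)).mp this
      have hδ' : 2 ^ (c + 1) ∣ (δ + 1 - 2 ^ c) := by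
        obtain ⟨m, hm⟩ := h2c
        have hm2 : ¬ 2 ∣ m := by
          rintro ⟨k, rfl⟩
          exact hnot ⟨k, by rw [hm, pow_succ]; ring⟩
        have hm1 : 1 ≤ m := Nat.pos_of_ne_zero (by rintro rfl; simp at hm)
        obtain ⟨k, hk⟩ : ∃ k, m - 1 = 2 * k := ⟨(m - 1) / 2, by omega⟩
        refine ⟨k, ?_⟩
        rw [hm, pow_succ]
        calc 2 ^ c * m - 2 ^ c = 2 ^ c * (m - 1) := by
              rcases Nat.exists_eq_add_of_le hm1 with ⟨p, rfl⟩
              rw [Nat.add_sub_cancel_left, Nat.mul_add, Nat.mul_one]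
              omega
          _ = 2 ^ c * (2 * k) := by rw [hk]
          _ = 2 ^ c * 2 * k := by ring
      have hH0 : (δ + 1 - 2 ^ c = 0) ∨ (2 ^ (c + 1) ∣ (δ + 1 - 2 ^ c) ∧
          2 ^ (c + 1) ≤ δ + 1 - 2 ^ c ∧ (δ + 1 - 2 ^ c) + 2 ^ (c + 1) ≤ 2 ^ (Δ - 1)) := by
        rcases Nat.eq_zero_or_pos (δ + 1 - 2 ^ c) with hz | hz
        · exact Or.inl hz
        · have hge : 2 ^ (c + 1) ≤ δ + 1 - 2 ^ c := Nat.le_of_dvd hz hδ'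
          have hlt : (2:ℕ) ^ (c + 1) < 2 ^ (Δ - 1) := by omega
          have hcc : c + 1 ≤ Δ - 1 :=
            le_of_lt ((Nat.pow_lt_pow_iff_right (by norm_num : 1 < 2)).mp hlt)
          have hdvdsub : 2 ^ (c + 1) ∣ 2 ^ (Δ - 1) - (δ + 1 - 2 ^ c) :=
            Nat.dvd_sub (pow_dvd_pow 2 hcc) hδ'
          have := Nat.le_of_dvd (by omega) hdvdsub
          exact Or.inr ⟨hδ', hge, by omega⟩
      obtain ⟨C0, -⟩ := IH (c + 1) (δ + 1 - 2 ^ c) (by omega)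
      obtain ⟨es, hasc, hmem⟩ := C0 hH0
      obtain ⟨e, hdiv, hmod, hends, hlab⟩ :=
        kedge_spec hΔ hh c ((β.val + (δ + 1 - 2 ^ c)) % h) (by omega) (Nat.mod_lt _ hh)
      have hv : (⟨((β.val + (δ + 1 - 2 ^ c)) % h + (2 ^ c - 1)) % h, Nat.mod_lt _ hh⟩ : Fin h)
          = ⟨(β.val + δ) % h, Nat.mod_lt _ hh⟩ := by
        apply Fin.ext
        show _ % h = _
        rw [Nat.mod_add_mod]
        congr 1
        have h1 : (1:ℕ) ≤ 2 ^ c := Nat.one_le_two_pow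
        omega
      rw [hv] at hends
      rw [Sym2.eq_swap] at hends
      refine ⟨e :: es, asc_cons hends hasc ?_, ?_⟩
      · intro e' he'
        have := hmem e' he'
        rw [hlab, knodel_label]
        omega
      · intro e' he'
        rcases List.mem_cons.mp he' with rfl | he'
        · omega
        · have := hmem e' he'; omega

end KnodelAux

open LabeledGraph in
/-- In `W_{Δ,n}` (`n = 2h` even), the set of vertices admitting an
ascending path to `(1,β)` equals `{(γ, (β+δ) mod h) : γ ∈ {1,2}, 0 ≤ δ ≤ 2^{Δ−1}−1}`. -/
theorem knodel_reach_set_one (Δ h : ℕ) (hΔ : 1 ≤ Δ) (hh : 0 < h) (β : Fin h) :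
    {w : Fin 2 × Fin h |
        ∃ es : List (Fin (knodel Δ h).m),
          (knodel Δ h).IsAscPath w ((0 : Fin 2), β) es}
      = {w : Fin 2 × Fin h | ∃ (γ : Fin 2) (δ : ℕ), δ ≤ 2 ^ (Δ - 1) - 1 ∧
          w = (γ, ⟨(β.val + δ) % h, Nat.mod_lt _ hh⟩)} := by
  ext w
  simp only [Set.mem_setOf_eq]
  constructor
  · rintro ⟨es, hwalk, hchain⟩
    obtain ⟨δ, hval, hcase⟩ := KnodelAux.fwd Δ h hh β es w hwalk hchain
    have h1 : (1:ℕ) ≤ 2 ^ (Δ - 1) := Nat.one_le_two_pow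
    have hbound : δ ≤ 2 ^ (Δ - 1) - 1 := by
      rcases hcase with ⟨-, rfl | ⟨e, -, hb1, hb2⟩⟩ | ⟨-, e, -, hb1, hb2⟩
      · omega
      · have : (1:ℕ) ≤ 2 ^ (e.val / h) := Nat.one_le_two_pow
        omega
      · omega
    refine ⟨w.1, δ, hbound, ?_⟩
    have hw2 : w.2 = ⟨(β.val + δ) % h, Nat.mod_lt _ hh⟩ := Fin.ext hval
    rw [← hw2]
  · rintro ⟨γ, δ, hδ, rfl⟩
    have h1 : (1:ℕ) ≤ 2 ^ (Δ - 1) := Nat.one_le_two_pow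
    fin_cases γ
    · obtain ⟨C0, -⟩ := KnodelAux.bwd Δ h hΔ hh β Δ 0 δ (by omega)
      obtain ⟨es, hasc, -⟩ := C0 (by
        rcases Nat.eq_zero_or_pos δ with rfl | hpos
        · exact Or.inl rfl
        · refine Or.inr ⟨?_, ?_, ?_⟩ <;> (try simp only [pow_zero]) <;> omega)
      exact ⟨es, hasc⟩
    · obtain ⟨-, C1⟩ := KnodelAux.bwd Δ h hΔ hh β Δ 0 δ (by omega)
      obtain ⟨es, hasc, -⟩ := C1 (by
        refine ⟨?_, ?_, ?_⟩ <;> (try simp only [pow_zero]) <;> omega)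
      exact ⟨es, hasc⟩
end
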